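/- If G is a (3,6)-tight graph and H is a graph containing a cycle a such that the glued graph G ∪_{d=a} H is (3,6)-tight (where d is a cycle of G identified with a, and G ∩ H is exactly this cycle), then for every subgraph L of H with at least 3 vertices, f(L) - f(L ∩ d) ≥ 6 - f(d), where f(K) = 3|V(K)| - |E(K)|. -/
import Mathlib


/-- A finite simple graph given by a vertex set and an edge set of unordered pairs. -/
structure FinGraph (α : Type*) [DecidableEq α] where
  verts : Finset α
  edges : Finset (Sym2 α)
  edge_mem : ∀ e ∈ edges, ∀ x ∈ e, x ∈ verts
  not_diag : ∀ e ∈ edges, ¬ e.IsDiag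

namespace FinGraph

variable {α : Type*} [DecidableEq α]

/-- The Maxwell count `f(G) = 3|V| - |E|`. -/
def maxwell (G : FinGraph α) : ℤ := 3 * G.verts.card - G.edges.card

/-- `H` is a subgraph of `G`. -/
def IsSubgraph (H G : FinGraph α) : Prop := H.verts ⊆ G.verts ∧ H.edges ⊆ G.edges

/-- `G` is (3,6)-sparse. -/
def Sparse (G : FinGraph α) : Prop :=
  ∀ H : FinGraph α, H.IsSubgraph G → 3 ≤ H.verts.card → 6 ≤ H.maxwell

/-- `G` is (3,6)-tight. -/
def Tight (G : FinGraph α) : Prop := Sparse G ∧ G.maxwell = 6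

end FinGraph

namespace FinGraph

variable {α : Type*} [DecidableEq α]

/-- Vertex-wise and edge-wise union of two graphs. -/
def union (G H : FinGraph α) : FinGraph α where
  verts := G.verts ∪ H.verts
  edges := G.edges ∪ H.edges
  edge_mem := by
    intro e he x hx
    rcases Finset.mem_union.mp he with h | h
    · exact Finset.mem_union_left _ (G.edge_mem e h x hx)
    · exact Finset.mem_union_right _ (H.edge_mem e h x hx)
  not_diag := by
    intro e he
    rcases Finset.mem_union.mp he with h | h
    · exact G.not_diag e h
    · exact H.not_diag e h

/-- Vertex-wise and edge-wise intersection of two graphs. -/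
def inter (G H : FinGraph α) : FinGraph α where
  verts := G.verts ∩ H.verts
  edges := G.edges ∩ H.edges
  edge_mem := by
    intro e he x hx
    exact Finset.mem_inter.mpr
      ⟨G.edge_mem e (Finset.mem_inter.mp he).1 x hx,
       H.edge_mem e (Finset.mem_inter.mp he).2 x hx⟩
  not_diag := fun e he => G.not_diag e (Finset.mem_inter.mp he).1

end FinGraph

/-- `D` is a cycle graph of length `n`: its vertices are `n` distinct points
`c 0, …, c (n-1)` and its edges are the consecutive pairs (cyclically). -/
def FinGraph.IsCycleOn {α : Type*} [DecidableEq α] (D : FinGraph α) (n : ℕ) : Prop :=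
  3 ≤ n ∧ ∃ c : ℕ → α, Set.InjOn c (Set.Iio n) ∧
    D.verts = (Finset.range n).image c ∧
    D.edges = (Finset.range n).image (fun i => s(c i, c ((i + 1) % n)))

/-- if G is (3,6)-tight and the glued graph G ∪ H is (3,6)-tight,
where G ∩ H is exactly a common cycle D, then every subgraph L of H with at
least 3 vertices satisfies f(L) - f(L ∩ D) ≥ 6 - f(D). -/
theorem glued_tight_subgraph_bound {α : Type*} [DecidableEq α]
    (G H D : FinGraph α) (n : ℕ)
    (hG : G.Tight)
    (hcyc : D.IsCycleOn n)
    (hDG : D.IsSubgraph G) (hDH : D.IsSubgraph H)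
    (hGH : G.inter H = D)
    (hglued : (G.union H).Tight) :
    ∀ L : FinGraph α, L.IsSubgraph H → 3 ≤ L.verts.card →
      6 - D.maxwell ≤ L.maxwell - (L.inter D).maxwell := by
  intro L hL hL3
  obtain ⟨hn3, c, hinj, hverts, hedges⟩ := hcyc
  have hDcard : D.verts.card = n := by
    rw [hverts, Finset.card_image_of_injOn (by simpa using hinj), Finset.card_range]
  have hD3 : 3 ≤ D.verts.card := hDcard ▸ hn3
  have hDm : 6 ≤ D.maxwell := hG.1 D hDG hD3
  have hsub : (G.union L).IsSubgraph (G.union H) :=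
    ⟨Finset.union_subset_union_right hL.1, Finset.union_subset_union_right hL.2⟩
  have hGcard : 3 ≤ G.verts.card := le_trans hD3 (Finset.card_le_card hDG.1)
  have hcard : 3 ≤ (G.union L).verts.card :=
    le_trans hGcard (Finset.card_le_card Finset.subset_union_left)
  have h6 : 6 ≤ (G.union L).maxwell := hglued.1 _ hsub hcard
  have hGHv : G.verts ∩ H.verts = D.verts := congrArg FinGraph.verts hGH
  have hGHe : G.edges ∩ H.edges = D.edges := congrArg FinGraph.edges hGH
  have hv : G.verts ∩ L.verts = (L.inter D).verts := by
    show _ = L.verts ∩ D.verts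
    rw [← hGHv]
    ext x
    simp only [Finset.mem_inter]
    constructor
    · rintro ⟨hg, hl⟩; exact ⟨hl, hg, hL.1 hl⟩
    · rintro ⟨hl, hg, _⟩; exact ⟨hg, hl⟩
  have he : G.edges ∩ L.edges = (L.inter D).edges := by
    show _ = L.edges ∩ D.edges
    rw [← hGHe]
    ext x
    simp only [Finset.mem_inter]
    constructor
    · rintro ⟨hg, hl⟩; exact ⟨hl, hg, hL.2 hl⟩
    · rintro ⟨hl, hg, _⟩; exact ⟨hg, hl⟩
  have cv : (G.union L).verts.card + (L.inter D).verts.card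
      = G.verts.card + L.verts.card := by
    rw [← hv]; exact Finset.card_union_add_card_inter _ _
  have ce : (G.union L).edges.card + (L.inter D).edges.card
      = G.edges.card + L.edges.card := by
    rw [← he]; exact Finset.card_union_add_card_inter _ _
  have cv' : ((G.union L).verts.card : ℤ) + (L.inter D).verts.card
      = G.verts.card + L.verts.card := by exact_mod_cast cv
  have ce' : ((G.union L).edges.card : ℤ) + (L.inter D).edges.card
      = G.edges.card + L.edges.card := by exact_mod_cast ce
  have hG6 := hG.2
  unfold FinGraph.maxwell at *
  linarith
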